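/- Let 𝓗 be a Hilbert space, G = 𝓗 ⋊ O(𝓗) the isometry group of 𝓗 acting canonically on 𝓗, and suppose the subgroup O(𝓗) ≤ G is coarsely bounded. Then the canonical action of G on 𝓗 is coarsely proper: for every sequence g_n = (v_n, u_n) ∈ G leaving every coarsely bounded subset of G, ‖g_n · 0‖ = ‖v_n‖ → ∞. -/
import Mathlib


open Filter

variable (𝓗 : Type*) [NormedAddCommGroup 𝓗] [InnerProductSpace ℝ 𝓗]

/-- The isometry group `𝓗 ⋊ O(𝓗)` of a real Hilbert space `𝓗`, as pairs
`(v, u)` of a translation part `v ∈ 𝓗` and an orthogonal part `u ∈ O(𝓗)`,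
acting by `(v, u) · x = u x + v`. -/
abbrev IsomGrp := 𝓗 × (𝓗 ≃ₗᵢ[ℝ] 𝓗)

/-- Norm topology on the orthogonal group. -/
noncomputable instance : TopologicalSpace (𝓗 ≃ₗᵢ[ℝ] 𝓗) :=
  TopologicalSpace.induced
    (fun u => (u.toLinearIsometry.toContinuousLinearMap : 𝓗 →L[ℝ] 𝓗)) inferInstance

/-- Semidirect product group structure on `𝓗 ⋊ O(𝓗)`. -/
instance : Group (IsomGrp 𝓗) where
  mul a b := (a.1 + a.2 b.1, a.2 * b.2)
  one := (0, 1)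
  inv a := (-(a.2⁻¹ a.1), a.2⁻¹)
  mul_assoc a b c := by
    refine Prod.ext ?_ (mul_assoc _ _ _)
    show a.1 + a.2 b.1 + (a.2 * b.2) c.1 = a.1 + a.2 (b.1 + b.2 c.1)
    simp [LinearIsometryEquiv.coe_mul, map_add, add_assoc]
  one_mul a := by
    refine Prod.ext ?_ (one_mul _)
    show (0 : 𝓗) + (1 : 𝓗 ≃ₗᵢ[ℝ] 𝓗) a.1 = a.1
    simp
  mul_one a := by
    refine Prod.ext ?_ (mul_one _)
    show a.1 + a.2 0 = a.1
    simp
  inv_mul_cancel a := by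
    refine Prod.ext ?_ (inv_mul_cancel _)
    show -(a.2⁻¹ a.1) + a.2⁻¹ a.1 = 0
    simp

/-- A subset `B` of a topological group is coarsely bounded if it has finite diameter with
respect to every continuous left-invariant pseudometric. -/
def CoarselyBounded {G : Type*} [Group G] [TopologicalSpace G] (B : Set G) : Prop :=
  ∀ d : G → G → ℝ,
    Continuous (fun p : G × G => d p.1 p.2) →
    (∀ k g h : G, d (k * g) (k * h) = d g h) →
    (∀ g : G, d g g = 0) →
    (∀ g h : G, d g h = d h g) →
    (∀ g h k : G, d g k ≤ d g h + d h k) →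
    ∃ C : ℝ, ∀ g ∈ B, ∀ h ∈ B, d g h ≤ C

lemma isomGrp_ball_coarselyBounded
    (hO : CoarselyBounded {g : IsomGrp 𝓗 | g.1 = 0}) (R : ℝ) :
    CoarselyBounded {h : IsomGrp 𝓗 | ‖h.1‖ ≤ R} := by
  intro d hc hl hrefl hsymm htri
  obtain ⟨C₀, hC₀⟩ := hO d hc hl hrefl hsymm htri
  set T : 𝓗 → IsomGrp 𝓗 := fun x => (x, 1) with hT
  have hTmul : ∀ x y : 𝓗, T x * T y = T (x + y) := by
    intro x y
    refine Prod.ext ?_ (one_mul 1)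
    show x + (1 : 𝓗 ≃ₗᵢ[ℝ] 𝓗) y = x + y
    simp
  have hT0 : T 0 = 1 := rfl
  have h0' : d 1 (T 0) = 0 := hrefl 1
  have hf : Continuous fun x : 𝓗 => d 1 (T x) :=
    hc.comp (continuous_const.prodMk (continuous_id.prodMk continuous_const))
  obtain ⟨δ, hδpos, hδ⟩ : ∃ δ > (0:ℝ), ∀ x : 𝓗, ‖x‖ ≤ δ → d 1 (T x) ≤ 1 := by
    have h1 : ∀ᶠ x in nhds (0:𝓗), d 1 (T x) < 1 :=
      Filter.Tendsto.eventually_lt_const (show d 1 (T 0) < 1 by rw [h0']; norm_num) hf.continuousAt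
    obtain ⟨ε, hεpos, hε⟩ := Metric.eventually_nhds_iff_ball.1 h1
    refine ⟨ε/2, by positivity, fun x hx => ?_⟩
    have : x ∈ Metric.ball (0:𝓗) ε := by
      rw [Metric.mem_ball, dist_zero_right]
      linarith
    exact (hε x this).le
  have step : ∀ n : ℕ, ∀ x : 𝓗, ‖x‖ ≤ n * δ → d 1 (T x) ≤ n := by
    intro n
    induction n with
    | zero =>
      intro x hx
      have hx0 : x = 0 := norm_le_zero_iff.1 (by simpa using hx)
      rw [hx0, h0']
      simp
    | succ n ih =>
      intro x hx
      by_cases hxn : ‖x‖ ≤ n * δ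
      · exact (ih x hxn).trans (by push_cast; linarith)
      push_neg at hxn
      have hxpos : 0 < ‖x‖ := lt_of_le_of_lt (by positivity) hxn
      set y := ((n * δ)/‖x‖) • x with hy
      have hny : ‖y‖ = n * δ := by
        rw [hy, norm_smul, Real.norm_eq_abs, abs_of_nonneg (by positivity),
          div_mul_cancel₀ _ (ne_of_gt hxpos)]
      have hz : ‖x - y‖ ≤ δ := by
        have hxy : x - y = (1 - (n*δ)/‖x‖) • x := by
          rw [hy, sub_smul, one_smul]
        have h1' : (n*δ)/‖x‖ ≤ 1 := by
          rw [div_le_one hxpos]; linarith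
        rw [hxy, norm_smul, Real.norm_eq_abs, abs_of_nonneg (by linarith),
          sub_mul, one_mul, div_mul_cancel₀ _ (ne_of_gt hxpos)]
        push_cast at hx ⊢
        linarith
      have e1 : d 1 (T y) ≤ n := ih y (le_of_eq hny)
      have e2 : d (T y) (T x) = d 1 (T (x - y)) := by
        have h := hl (T y) 1 (T (x - y))
        rw [mul_one, hTmul] at h
        have hyx : y + (x - y) = x := by abel
        rw [hyx] at h
        exact h
      have e3 : d 1 (T (x - y)) ≤ 1 := hδ _ hz
      calc d 1 (T x) ≤ d 1 (T y) + d (T y) (T x) := htri _ _ _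
        _ ≤ n + 1 := by rw [e2]; linarith
        _ = ((n+1 : ℕ) : ℝ) := by push_cast; ring
  have main : ∀ h : IsomGrp 𝓗, ‖h.1‖ ≤ R → d 1 h ≤ (⌈R/δ⌉₊ : ℝ) + C₀ := by
    intro h hh
    have hsplit : T h.1 * (0, h.2) = h := by
      refine Prod.ext ?_ (one_mul _)
      show h.1 + (1 : 𝓗 ≃ₗᵢ[ℝ] 𝓗) 0 = h.1
      simp
    have e1 : d 1 (T h.1) ≤ (⌈R/δ⌉₊ : ℝ) := by
      apply step
      have hR : R ≤ (⌈R/δ⌉₊ : ℝ) * δ := by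
        rcases le_or_gt R 0 with hR0 | hR0
        · exact hR0.trans (by positivity)
        · rw [← div_le_iff₀ hδpos]
          exact Nat.le_ceil _
      linarith
    have e2 : d (T h.1) h ≤ C₀ := by
      have h' := hl (T h.1) 1 ((0, h.2) : IsomGrp 𝓗)
      rw [mul_one, hsplit] at h'
      rw [h']
      exact hC₀ 1 rfl (0, h.2) rfl
    calc d 1 h ≤ d 1 (T h.1) + d (T h.1) h := htri _ _ _
      _ ≤ _ := by linarith
  refine ⟨2 * ((⌈R/δ⌉₊ : ℝ) + C₀), fun a ha b hb => ?_⟩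
  have ha' := main a ha
  have hb' := main b hb
  calc d a b ≤ d a 1 + d 1 b := htri _ _ _
    _ = d 1 a + d 1 b := by rw [hsymm a 1]
    _ ≤ 2 * ((⌈R/δ⌉₊ : ℝ) + C₀) := by linarith

theorem isomGrp_action_coarsely_proper
    (hO : CoarselyBounded {g : IsomGrp 𝓗 | g.1 = 0})
    (g : ℕ → IsomGrp 𝓗)
    (hg : ∀ B : Set (IsomGrp 𝓗), CoarselyBounded B → ∀ᶠ n in atTop, g n ∉ B) :
    Tendsto (fun n => ‖(g n).1‖) atTop atTop := by
  rw [tendsto_atTop]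
  intro b
  filter_upwards [hg _ (isomGrp_ball_coarselyBounded 𝓗 hO b)] with n hn
  exact (lt_of_not_ge hn).le
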